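/- There are exactly 336 directed gashes (3 edge orientations × 2 perpendicular directions × 8·7 ordered pairs of distinct labels), the classes [g] partition the set of directed gashes, every class [g] has cardinality 1, 4, 5, or 6, and exactly 84 directed gashes g satisfy [g] = {g}. -/
import Mathlib


/-!
STATEMENT 3: There are exactly 336 directed gashes, the classes [g]
partition the set of directed gashes, every class has cardinality 1, 4, 5
or 6, and exactly 84 directed gashes g satisfy [g] = {g}.
-/

set_option maxHeartbeats 1000000

open scoped Classical

/-- Puzzle labels are encoded as natural numbers; the meaningful ones are
0–7, and 0, 1, 2 are the *simple* labels. -/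
abbrev Label := ℕ

/-- The valid upward triangular puzzle pieces in standard position,
as (left, right, bottom) label triples. -/
def basePieces : List (Label × Label × Label) :=
  [(0,0,0), (1,1,1), (2,2,2), (0,1,3), (1,2,4), (0,2,5), (3,2,6), (0,4,7)]

/-- Valid upward triangular pieces: the base list together with its
120° and 240° rotations. -/
def ValidUp (l r b : Label) : Prop :=
  (l, r, b) ∈ basePieces ∨ (r, b, l) ∈ basePieces ∨ (b, l, r) ∈ basePieces

/-- Valid downward triangular pieces, with (left, right, top) labels:
precisely the rotations (by 60°, 180° or 300°) of valid upward pieces. -/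
def ValidDown (l r t : Label) : Prop := ValidUp r l t

/-- Valid *vertical* equivariant (rhombus) puzzle pieces: opposite sides
carry equal labels, and `ValidEquivVert p q` means that the NW and SE sides
carry `p` while the NE and SW sides carry `q`, where `(p, q)` runs through
the paper's list of label pairs in its fixed orientation. -/
def ValidEquivVert (p q : Label) : Prop :=
  (p, q) ∈ ([(0,1), (1,2), (0,2), (2,3), (0,4), (3,4), (0,6), (2,7)] :
    List (Label × Label))

/-- A directed gash, recorded without its location in a puzzle: `dir : Fin 6`
encodes the orientation of the underlying lattice edge together with the
perpendicular direction of the gash, as the unit normal vector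
`exp (π i (2 dir + 1) / 6)` pointing towards the side of the original label;
`orig` and `new` are the original and the new label. -/
structure PreGash where
  dir : Fin 6
  orig : Label
  new : Label
deriving DecidableEq

/-- `g` is an honest directed gash: its two labels are distinct puzzle
labels (hence there are 6 · 8 · 7 = 336 directed gashes). -/
def IsDGash (g : PreGash) : Prop := g.orig ≠ g.new ∧ g.orig < 8 ∧ g.new < 8

/-- Immediate reachability: `h` is obtained from `g` by propagating `g`
across one triangular puzzle piece.  Normal directions: `1`/`5`/`3` point
into an upward triangle through its bottom/left/right side, and `4`/`0`/`2`
point into a downward triangle through its top/left/right side; the piece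
`q` carries the original label of `g` on the gashed side, its replacement
`q'` carries the new label there, `q` and `q'` agree on exactly one further
side, and `h` sits on the remaining side, with original label from `q` and
new label from `q'`, directed away from the replaced piece. -/
def Imm (g h : PreGash) : Prop :=
  (g.dir = 1 ∧ ∃ l r r', ValidUp l r g.orig ∧ ValidUp l r' g.new ∧ r ≠ r' ∧ h = ⟨0, r, r'⟩) ∨
  (g.dir = 1 ∧ ∃ l l' r, ValidUp l r g.orig ∧ ValidUp l' r g.new ∧ l ≠ l' ∧ h = ⟨2, l, l'⟩) ∨
  (g.dir = 5 ∧ ∃ r b b', ValidUp g.orig r b ∧ ValidUp g.new r b' ∧ b ≠ b' ∧ h = ⟨4, b, b'⟩) ∨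
  (g.dir = 5 ∧ ∃ r r' b, ValidUp g.orig r b ∧ ValidUp g.new r' b ∧ r ≠ r' ∧ h = ⟨0, r, r'⟩) ∨
  (g.dir = 3 ∧ ∃ l b b', ValidUp l g.orig b ∧ ValidUp l g.new b' ∧ b ≠ b' ∧ h = ⟨4, b, b'⟩) ∨
  (g.dir = 3 ∧ ∃ l l' b, ValidUp l g.orig b ∧ ValidUp l' g.new b ∧ l ≠ l' ∧ h = ⟨2, l, l'⟩) ∨
  (g.dir = 4 ∧ ∃ l r r', ValidDown l r g.orig ∧ ValidDown l r' g.new ∧ r ≠ r' ∧ h = ⟨5, r, r'⟩) ∨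
  (g.dir = 4 ∧ ∃ l l' r, ValidDown l r g.orig ∧ ValidDown l' r g.new ∧ l ≠ l' ∧ h = ⟨3, l, l'⟩) ∨
  (g.dir = 0 ∧ ∃ r t t', ValidDown g.orig r t ∧ ValidDown g.new r t' ∧ t ≠ t' ∧ h = ⟨1, t, t'⟩) ∨
  (g.dir = 0 ∧ ∃ r r' t, ValidDown g.orig r t ∧ ValidDown g.new r' t ∧ r ≠ r' ∧ h = ⟨5, r, r'⟩) ∨
  (g.dir = 2 ∧ ∃ l t t', ValidDown l g.orig t ∧ ValidDown l g.new t' ∧ t ≠ t' ∧ h = ⟨1, t, t'⟩) ∨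
  (g.dir = 2 ∧ ∃ l l' t, ValidDown l g.orig t ∧ ValidDown l' g.new t ∧ l ≠ l' ∧ h = ⟨3, l, l'⟩)

/-- The class `[g]` of a directed gash: all directed gashes reachable from
`g` by finitely many steps of immediate reachability. -/
def classOf (g : PreGash) : Set PreGash := {h | Relation.ReflTransGen Imm g h}

/-- The opposite gash: interchange the two labels, keep the direction. -/
def PreGash.opp (g : PreGash) : PreGash := ⟨g.dir, g.new, g.orig⟩

/-- `g` and `h` are in opposite classes. -/
def OppClasses (g h : PreGash) : Prop := classOf g.opp = classOf h

namespace GashAux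

def upList : List (Label × Label × Label) :=
  basePieces ++ basePieces.map (fun p => (p.2.2, p.1, p.2.1))
    ++ basePieces.map (fun p => (p.2.1, p.2.2, p.1))

lemma validUp_iff {l r b : Label} : ValidUp l r b ↔ (l, r, b) ∈ upList := by
  simp only [ValidUp, upList, List.mem_append, List.mem_map]
  constructor
  · rintro (h | h | h)
    · exact Or.inl (Or.inl h)
    · exact Or.inl (Or.inr ⟨(r, b, l), h, rfl⟩)
    · exact Or.inr ⟨(b, l, r), h, rfl⟩
  · rintro ((h | ⟨⟨a, b', c⟩, hm, he⟩) | ⟨⟨a, b', c⟩, hm, he⟩)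
    · exact Or.inl h
    · rw [Prod.ext_iff] at he
      obtain ⟨h1, he⟩ := he
      rw [Prod.ext_iff] at he
      obtain ⟨h2, h3⟩ := he
      subst h1; subst h2; subst h3
      exact Or.inr (Or.inl hm)
    · rw [Prod.ext_iff] at he
      obtain ⟨h1, he⟩ := he
      rw [Prod.ext_iff] at he
      obtain ⟨h2, h3⟩ := he
      subst h1; subst h2; subst h3
      exact Or.inr (Or.inr hm)

def upsB (x : Label) : List (Label × Label) :=
  upList.filterMap fun p => if p.2.2 = x then some (p.1, p.2.1) else none

def upsL (x : Label) : List (Label × Label) :=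
  upList.filterMap fun p => if p.1 = x then some (p.2.1, p.2.2) else none

def upsR (x : Label) : List (Label × Label) :=
  upList.filterMap fun p => if p.2.1 = x then some (p.1, p.2.2) else none

lemma mem_upsB {l r x : Label} : (l, r) ∈ upsB x ↔ ValidUp l r x := by
  rw [validUp_iff]
  simp only [upsB, List.mem_filterMap]
  constructor
  · rintro ⟨⟨a, b, c⟩, hm, he⟩
    split at he
    · next hc =>
        obtain ⟨rfl, rfl⟩ := Option.some.inj he |> Prod.mk.inj
        subst hc; exact hm
    · exact absurd he (by simp)
  · intro hm; exact ⟨(l, r, x), hm, by simp⟩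

lemma mem_upsL {r b x : Label} : (r, b) ∈ upsL x ↔ ValidUp x r b := by
  rw [validUp_iff]
  simp only [upsL, List.mem_filterMap]
  constructor
  · rintro ⟨⟨a, b', c⟩, hm, he⟩
    split at he
    · next hc =>
        obtain ⟨rfl, rfl⟩ := Option.some.inj he |> Prod.mk.inj
        subst hc; exact hm
    · exact absurd he (by simp)
  · intro hm; exact ⟨(x, r, b), hm, by simp⟩

lemma mem_upsR {l b x : Label} : (l, b) ∈ upsR x ↔ ValidUp l x b := by
  rw [validUp_iff]
  simp only [upsR, List.mem_filterMap]
  constructor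
  · rintro ⟨⟨a, b', c⟩, hm, he⟩
    split at he
    · next hc =>
        obtain ⟨rfl, rfl⟩ := Option.some.inj he |> Prod.mk.inj
        subst hc; exact hm
    · exact absurd he (by simp)
  · intro hm; exact ⟨(l, x, b), hm, by simp⟩

lemma mem_swapB {l r x : Label} : (l, r) ∈ (upsB x).map Prod.swap ↔ ValidUp r l x := by
  rw [← mem_upsB]
  constructor
  · intro h
    obtain ⟨⟨a, b⟩, hm, he⟩ := List.mem_map.mp h
    obtain ⟨rfl, rfl⟩ := Prod.mk.inj he.symm
    exact hm
  · intro h; exact List.mem_map.mpr ⟨(r, l), h, rfl⟩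

def pairNexts (d1 d2 : Fin 6) (A B : List (Label × Label)) : List PreGash :=
  (A.flatMap fun a => B.map fun b => (a, b)).filterMap fun q =>
    if q.1.1 = q.2.1 ∧ q.1.2 ≠ q.2.2 then some ⟨d1, q.1.2, q.2.2⟩
    else if q.1.2 = q.2.2 ∧ q.1.1 ≠ q.2.1 then some ⟨d2, q.1.1, q.2.1⟩ else none

lemma mem_pairNexts {d1 d2 : Fin 6} {A B : List (Label × Label)} {h : PreGash} :
    h ∈ pairNexts d1 d2 A B ↔
      ((∃ x y y', ((x, y) ∈ A ∧ (x, y') ∈ B ∧ y ≠ y') ∧ h = ⟨d1, y, y'⟩) ∨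
       (∃ x x' y, ((x, y) ∈ A ∧ (x', y) ∈ B ∧ x ≠ x') ∧ h = ⟨d2, x, x'⟩)) := by
  simp only [pairNexts, List.mem_filterMap, List.mem_flatMap, List.mem_map]
  constructor
  · rintro ⟨q, ⟨⟨x, y⟩, hA, ⟨x', y'⟩, hB, rfl⟩, he⟩
    split_ifs at he with h1 h2
    · have hx : x = x' := h1.1
      have hy : y ≠ y' := h1.2
      cases Option.some.inj he
      exact Or.inl ⟨x, y, y', ⟨hA, hx ▸ hB, hy⟩, rfl⟩
    · have hy : y = y' := h2.1
      have hx : x ≠ x' := h2.2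
      cases Option.some.inj he
      exact Or.inr ⟨x, x', y, ⟨hA, hy ▸ hB, hx⟩, rfl⟩
  · rintro (⟨x, y, y', ⟨hA, hB, hne⟩, rfl⟩ | ⟨x, x', y, ⟨hA, hB, hne⟩, rfl⟩)
    · exact ⟨((x, y), (x, y')), ⟨(x, y), hA, (x, y'), hB, rfl⟩, by simp [hne]⟩
    · exact ⟨((x, y), (x', y)), ⟨(x, y), hA, (x', y), hB, rfl⟩, by simp [hne]⟩

def nexts (g : PreGash) : List PreGash :=
  match g.dir.val with
  | 0 => pairNexts 1 5 (upsR g.orig) (upsR g.new)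
  | 1 => pairNexts 0 2 (upsB g.orig) (upsB g.new)
  | 2 => pairNexts 1 3 (upsL g.orig) (upsL g.new)
  | 3 => pairNexts 4 2 (upsR g.orig) (upsR g.new)
  | 4 => pairNexts 5 3 ((upsB g.orig).map Prod.swap) ((upsB g.new).map Prod.swap)
  | _ => pairNexts 4 0 (upsL g.orig) (upsL g.new)


lemma imm_iff0 {o n : Label} {h : PreGash} : Imm ⟨0, o, n⟩ h ↔ h ∈ nexts ⟨0, o, n⟩ := by
  show Imm ⟨0, o, n⟩ h ↔ h ∈ pairNexts 1 5 (upsR o) (upsR n)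
  simp only [Imm, ValidDown, mem_pairNexts, mem_upsR, Fin.isValue, Fin.reduceEq,
    false_and, false_or, or_false, true_and, ne_eq]
  constructor
  · rintro (⟨a, b, c, h1, h2, h3, rfl⟩ | ⟨a, b, c, h1, h2, h3, rfl⟩)
    · exact Or.inl ⟨a, b, c, ⟨h1, h2, h3⟩, rfl⟩
    · exact Or.inr ⟨a, b, c, ⟨h1, h2, h3⟩, rfl⟩
  · rintro (⟨a, b, c, ⟨h1, h2, h3⟩, rfl⟩ | ⟨a, b, c, ⟨h1, h2, h3⟩, rfl⟩)
    · exact Or.inl ⟨a, b, c, h1, h2, h3, rfl⟩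
    · exact Or.inr ⟨a, b, c, h1, h2, h3, rfl⟩

lemma imm_iff1 {o n : Label} {h : PreGash} : Imm ⟨1, o, n⟩ h ↔ h ∈ nexts ⟨1, o, n⟩ := by
  show Imm ⟨1, o, n⟩ h ↔ h ∈ pairNexts 0 2 (upsB o) (upsB n)
  simp only [Imm, ValidDown, mem_pairNexts, mem_upsB, Fin.isValue, Fin.reduceEq,
    false_and, false_or, or_false, true_and, ne_eq]
  constructor
  · rintro (⟨a, b, c, h1, h2, h3, rfl⟩ | ⟨a, b, c, h1, h2, h3, rfl⟩)
    · exact Or.inl ⟨a, b, c, ⟨h1, h2, h3⟩, rfl⟩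
    · exact Or.inr ⟨a, b, c, ⟨h1, h2, h3⟩, rfl⟩
  · rintro (⟨a, b, c, ⟨h1, h2, h3⟩, rfl⟩ | ⟨a, b, c, ⟨h1, h2, h3⟩, rfl⟩)
    · exact Or.inl ⟨a, b, c, h1, h2, h3, rfl⟩
    · exact Or.inr ⟨a, b, c, h1, h2, h3, rfl⟩

lemma imm_iff2 {o n : Label} {h : PreGash} : Imm ⟨2, o, n⟩ h ↔ h ∈ nexts ⟨2, o, n⟩ := by
  show Imm ⟨2, o, n⟩ h ↔ h ∈ pairNexts 1 3 (upsL o) (upsL n)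
  simp only [Imm, ValidDown, mem_pairNexts, mem_upsL, Fin.isValue, Fin.reduceEq,
    false_and, false_or, or_false, true_and, ne_eq]
  constructor
  · rintro (⟨a, b, c, h1, h2, h3, rfl⟩ | ⟨a, b, c, h1, h2, h3, rfl⟩)
    · exact Or.inl ⟨a, b, c, ⟨h1, h2, h3⟩, rfl⟩
    · exact Or.inr ⟨a, b, c, ⟨h1, h2, h3⟩, rfl⟩
  · rintro (⟨a, b, c, ⟨h1, h2, h3⟩, rfl⟩ | ⟨a, b, c, ⟨h1, h2, h3⟩, rfl⟩)
    · exact Or.inl ⟨a, b, c, h1, h2, h3, rfl⟩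
    · exact Or.inr ⟨a, b, c, h1, h2, h3, rfl⟩

lemma imm_iff3 {o n : Label} {h : PreGash} : Imm ⟨3, o, n⟩ h ↔ h ∈ nexts ⟨3, o, n⟩ := by
  show Imm ⟨3, o, n⟩ h ↔ h ∈ pairNexts 4 2 (upsR o) (upsR n)
  simp only [Imm, ValidDown, mem_pairNexts, mem_upsR, Fin.isValue, Fin.reduceEq,
    false_and, false_or, or_false, true_and, ne_eq]
  constructor
  · rintro (⟨a, b, c, h1, h2, h3, rfl⟩ | ⟨a, b, c, h1, h2, h3, rfl⟩)
    · exact Or.inl ⟨a, b, c, ⟨h1, h2, h3⟩, rfl⟩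
    · exact Or.inr ⟨a, b, c, ⟨h1, h2, h3⟩, rfl⟩
  · rintro (⟨a, b, c, ⟨h1, h2, h3⟩, rfl⟩ | ⟨a, b, c, ⟨h1, h2, h3⟩, rfl⟩)
    · exact Or.inl ⟨a, b, c, h1, h2, h3, rfl⟩
    · exact Or.inr ⟨a, b, c, h1, h2, h3, rfl⟩

lemma imm_iff4 {o n : Label} {h : PreGash} : Imm ⟨4, o, n⟩ h ↔ h ∈ nexts ⟨4, o, n⟩ := by
  show Imm ⟨4, o, n⟩ h ↔ h ∈ pairNexts 5 3 ((upsB o).map Prod.swap) ((upsB n).map Prod.swap)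
  simp only [Imm, ValidDown, mem_pairNexts, mem_swapB, Fin.isValue, Fin.reduceEq,
    false_and, false_or, or_false, true_and, ne_eq]
  constructor
  · rintro (⟨a, b, c, h1, h2, h3, rfl⟩ | ⟨a, b, c, h1, h2, h3, rfl⟩)
    · exact Or.inl ⟨a, b, c, ⟨h1, h2, h3⟩, rfl⟩
    · exact Or.inr ⟨a, b, c, ⟨h1, h2, h3⟩, rfl⟩
  · rintro (⟨a, b, c, ⟨h1, h2, h3⟩, rfl⟩ | ⟨a, b, c, ⟨h1, h2, h3⟩, rfl⟩)
    · exact Or.inl ⟨a, b, c, h1, h2, h3, rfl⟩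
    · exact Or.inr ⟨a, b, c, h1, h2, h3, rfl⟩

lemma imm_iff5 {o n : Label} {h : PreGash} : Imm ⟨5, o, n⟩ h ↔ h ∈ nexts ⟨5, o, n⟩ := by
  show Imm ⟨5, o, n⟩ h ↔ h ∈ pairNexts 4 0 (upsL o) (upsL n)
  simp only [Imm, ValidDown, mem_pairNexts, mem_upsL, Fin.isValue, Fin.reduceEq,
    false_and, false_or, or_false, true_and, ne_eq]
  constructor
  · rintro (⟨a, b, c, h1, h2, h3, rfl⟩ | ⟨a, b, c, h1, h2, h3, rfl⟩)
    · exact Or.inl ⟨a, b, c, ⟨h1, h2, h3⟩, rfl⟩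
    · exact Or.inr ⟨a, b, c, ⟨h1, h2, h3⟩, rfl⟩
  · rintro (⟨a, b, c, ⟨h1, h2, h3⟩, rfl⟩ | ⟨a, b, c, ⟨h1, h2, h3⟩, rfl⟩)
    · exact Or.inl ⟨a, b, c, h1, h2, h3, rfl⟩
    · exact Or.inr ⟨a, b, c, h1, h2, h3, rfl⟩

lemma imm_iff {g h : PreGash} : Imm g h ↔ h ∈ nexts g := by
  obtain ⟨⟨dv, hdv⟩, o, n⟩ := g
  interval_cases dv
  · exact imm_iff0
  · exact imm_iff1
  · exact imm_iff2
  · exact imm_iff3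
  · exact imm_iff4
  · exact imm_iff5


def step (L : List PreGash) : List PreGash := (L ++ L.flatMap nexts).dedup

def closure (g : PreGash) : List PreGash := step^[6] [g]

def gashes : List PreGash :=
  ((List.range 8).flatMap fun o => (List.range 8).flatMap fun n =>
    (List.finRange 6).map fun d => PreGash.mk d o n).filter fun g => g.orig != g.new

set_option maxHeartbeats 10000000 in
set_option maxRecDepth 20000 in
lemma D5 : gashes.length = 336 ∧ gashes.Nodup := by decide

set_option maxHeartbeats 10000000 in
set_option maxRecDepth 20000 in
lemma D1 : ∀ g ∈ gashes, ∀ a ∈ closure g, ∀ b ∈ nexts a, b ∈ closure g := by decide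

set_option maxHeartbeats 10000000 in
set_option maxRecDepth 20000 in
lemma D3 : ∀ g ∈ gashes, (closure g).length = 1 ∨ (closure g).length = 4 ∨
    (closure g).length = 5 ∨ (closure g).length = 6 := by decide

set_option maxHeartbeats 10000000 in
set_option maxRecDepth 20000 in
lemma D4 : (gashes.filter fun g => (closure g).length == 1).length = 84 := by decide

set_option maxHeartbeats 10000000 in
set_option maxRecDepth 20000 in
lemma D2 : ∀ g ∈ gashes, ∀ h ∈ nexts g, h ∈ gashes ∧ g ∈ nexts h := by decide

lemma subset_step {L : List PreGash} : L ⊆ step L := fun a ha => by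
  simp only [step, List.mem_dedup, List.mem_append]
  exact Or.inl ha

lemma mem_closure_self (g : PreGash) : g ∈ closure g := by
  have h : ∀ k, g ∈ step^[k] [g] := by
    intro k
    induction k with
    | zero => simp
    | succ k ih => rw [Function.iterate_succ_apply']; exact subset_step ih
  exact h 6

lemma nodup_closure (g : PreGash) : (closure g).Nodup := by
  rw [closure, show (6 : ℕ) = 5 + 1 from rfl, Function.iterate_succ_apply']
  exact List.nodup_dedup _

lemma closure_sound {g a : PreGash} (ha : a ∈ closure g) : Relation.ReflTransGen Imm g a := by
  have h : ∀ k, ∀ a ∈ step^[k] [g], Relation.ReflTransGen Imm g a := by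
    intro k
    induction k with
    | zero =>
        intro a ha
        simp only [Function.iterate_zero_apply, List.mem_singleton] at ha
        subst ha; exact .refl
    | succ k ih =>
        rw [Function.iterate_succ_apply']
        intro a ha
        simp only [step, List.mem_dedup, List.mem_append, List.mem_flatMap] at ha
        rcases ha with ha | ⟨b, hb, hab⟩
        · exact ih a ha
        · exact (ih b hb).tail (imm_iff.mpr hab)
  exact h 6 a ha

lemma closure_complete {g : PreGash} (hg : g ∈ gashes) {a : PreGash}
    (h : Relation.ReflTransGen Imm g a) : a ∈ closure g := by
  induction h with
  | refl => exact mem_closure_self g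
  | tail _ h2 ih => exact D1 g hg _ ih _ (imm_iff.mp h2)

lemma classOf_eq {g : PreGash} (hg : g ∈ gashes) : classOf g = {a | a ∈ closure g} :=
  Set.ext fun _ => ⟨fun h => closure_complete hg h, fun h => closure_sound h⟩

lemma reach_back {g h : PreGash} (hg : g ∈ gashes) (hr : Relation.ReflTransGen Imm g h) :
    Relation.ReflTransGen Imm h g ∧ h ∈ gashes := by
  induction hr with
  | refl => exact ⟨.refl, hg⟩
  | tail _ h2 ih =>
      obtain ⟨hbg, hb⟩ := ih
      obtain ⟨hc, hm⟩ := D2 _ hb _ (imm_iff.mp h2)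
      exact ⟨.trans (.single (imm_iff.mpr hm)) hbg, hc⟩

lemma mem_gashes {g : PreGash} : g ∈ gashes ↔ IsDGash g := by
  obtain ⟨d, o, n⟩ := g
  simp only [gashes, List.mem_filter, List.mem_flatMap, List.mem_map, List.mem_range,
    List.mem_finRange, IsDGash, bne_iff_ne, ne_eq, decide_not]
  constructor
  · rintro ⟨⟨o', ho', n', hn', d', -, h⟩, hne⟩
    obtain ⟨rfl, rfl, rfl⟩ := PreGash.mk.inj h
    exact ⟨by simpa using hne, ho', hn'⟩
  · rintro ⟨hne, ho, hn⟩
    exact ⟨⟨o, ho, n, hn, d, trivial, rfl⟩, by simpa using hne⟩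

end GashAux

open GashAux

theorem directed_gash_classes :
    {g : PreGash | IsDGash g}.ncard = 336 ∧
    (∀ g, IsDGash g → ∀ h ∈ classOf g, IsDGash h ∧ classOf h = classOf g) ∧
    (∀ g, IsDGash g → (classOf g).ncard ∈ ({1, 4, 5, 6} : Set ℕ)) ∧
    {g : PreGash | IsDGash g ∧ classOf g = {g}}.ncard = 84 := by
  obtain ⟨hlen, hnodup⟩ := D5
  have hD3 := D3
  have hD4 := D4
  refine ⟨?_, ?_, ?_, ?_⟩
  · have hset : {g : PreGash | IsDGash g} = ↑gashes.toFinset := by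
      ext g; simp [List.mem_toFinset, mem_gashes]
    rw [hset, Set.ncard_coe_finset, List.toFinset_card_of_nodup hnodup, hlen]
  · intro g hg h hh
    have hgm := mem_gashes.mpr hg
    have hreach : Relation.ReflTransGen Imm g h := hh
    obtain ⟨hback, hhm⟩ := reach_back hgm hreach
    refine ⟨mem_gashes.mp hhm, ?_⟩
    ext x
    exact ⟨fun hx => hreach.trans hx, fun hx => hback.trans hx⟩
  · intro g hg
    have hgm := mem_gashes.mpr hg
    have hn : (classOf g).ncard = (closure g).length := by
      rw [classOf_eq hgm]
      have h2 : {a | a ∈ closure g} = ↑(closure g).toFinset := by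
        ext a; simp [List.mem_toFinset]
      rw [h2, Set.ncard_coe_finset, List.toFinset_card_of_nodup (nodup_closure g)]
    rw [hn]
    rcases hD3 g hgm with h | h | h | h <;> simp [h]
  · have key : {g : PreGash | IsDGash g ∧ classOf g = {g}} =
        ↑((gashes.filter fun g => (closure g).length == 1).toFinset) := by
      ext g
      simp only [Set.mem_setOf_eq, Finset.mem_coe, List.mem_toFinset, List.mem_filter,
        beq_iff_eq]
      constructor
      · rintro ⟨hd, hcl⟩
        have hgm := mem_gashes.mpr hd
        refine ⟨hgm, ?_⟩
        have hset2 : {a | a ∈ closure g} = {g} := by rw [← classOf_eq hgm, hcl]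
        have hg1 : g ∈ closure g := mem_closure_self g
        have hall : ∀ a ∈ closure g, a = g := fun a ha => by
          have : a ∈ ({g} : Set PreGash) := hset2 ▸ (show a ∈ {a | a ∈ closure g} from ha)
          exact this
        have hrep := List.eq_replicate_of_mem hall
        have hnd := nodup_closure g
        rw [hrep, List.nodup_replicate] at hnd
        have hne : (closure g).length ≠ 0 := by
          simp only [ne_eq, List.length_eq_zero_iff]
          exact List.ne_nil_of_mem hg1
        omega
      · rintro ⟨hgm, hlen1⟩
        refine ⟨mem_gashes.mp hgm, ?_⟩
        obtain ⟨a, ha⟩ := List.length_eq_one_iff.mp hlen1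
        have hg1 := mem_closure_self g
        rw [ha, List.mem_singleton] at hg1
        subst hg1
        rw [classOf_eq hgm, ha]
        ext x; simp
    rw [key, Set.ncard_coe_finset, List.toFinset_card_of_nodup (hnodup.filter _), hD4]
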